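/- Let m ∈ ℕ with m ≥ 2, let τ ∈ [0,1) ∩ ℚ, let a : ℤ → ℝ be a finitely supported mask, and let φ : ℝ → ℝ be a continuous, compactly supported function satisfying the refinement equation φ(x) = Σ_{k∈ℤ} a_k φ(mx − k + τ) for all x ∈ ℝ, such that |φ(x)| + |φ̂(x)| ≤ C(1 + |x|)^{−1−ε} for all x ∈ ℝ, for some C, ε > 0. Then for every T ∈ ℕ, T ≥ 1, with τT ∈ ℕ, and for every ω ∈ ℝ, writing z = e^{−2πiω/T}, the following identity holds: Σ_{γ=0}^{mT−1} Φ_{T,γ}(z^m) = m z^{−τT} Σ_{β=0}^{m−1} Σ_{γ=0,…,mT−1 with γ+βT ≡ τT (mod m)} A_β(z^T) Φ_{T,γ}(z). -/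

import Mathlib

open Function

/-- The Fourier transform `φ̂(ω) = ∫ φ(x) e^{-2πixω} dx`. -/
noncomputable def fourierT (φ : ℝ → ℝ) (ω : ℝ) : ℂ :=
  ∫ x : ℝ, (φ x : ℂ) * Complex.exp (-(2 * (Real.pi : ℂ) * Complex.I * (x : ℂ) * (ω : ℂ)))

/-- The Laurent polynomial `Φ_{T,n}(z) = (1/T) Σ_k φ(mk + n/T) z^(mTk+n)`. -/
noncomputable def PhiSub (φ : ℝ → ℝ) (m T : ℕ) (n : ℤ) (z : ℂ) : ℂ :=
  (T : ℂ)⁻¹ * ∑ᶠ k : ℤ, (φ ((m : ℝ) * (k : ℝ) + (n : ℝ) / (T : ℝ)) : ℂ) * z ^ ((m : ℤ) * (T : ℤ) * k + n)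

/-- The sub-symbol `A_n(z) = (1/m) Σ_k a_{mk+n} z^(mk+n)` of the mask `a`. -/
noncomputable def ASub (a : ℤ → ℝ) (m : ℕ) (n : ℤ) (z : ℂ) : ℂ :=
  (m : ℂ)⁻¹ * ∑ᶠ k : ℤ, (a ((m : ℤ) * k + n) : ℂ) * z ^ ((m : ℤ) * k + n)

lemma finsum_int_eq_icc (f : ℤ → ℂ) (lo hi : ℤ)
    (h : ∀ n, f n ≠ 0 → lo ≤ n ∧ n ≤ hi) :
    ∑ᶠ n : ℤ, f n = ∑ n ∈ Finset.Icc lo hi, f n := by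
  apply finsum_eq_finset_sum_of_support_subset
  intro n hn
  simp only [Finset.coe_Icc, Set.mem_Icc]
  exact h n hn

lemma sum_residues (f : ℤ → ℂ) (hf : (Function.support f).Finite) (N : ℕ) (hN : 0 < N) :
    ∑ᶠ n : ℤ, f n = ∑ γ ∈ Finset.range N, ∑ᶠ k : ℤ, f ((N : ℤ) * k + (γ : ℤ)) := by
  classical
  set B : ℕ := hf.toFinset.sup Int.natAbs with hB
  have hsup : ∀ n : ℤ, f n ≠ 0 → -(B:ℤ) ≤ n ∧ n ≤ B := by
    intro n hn
    have h1 : n.natAbs ≤ B := Finset.le_sup (hf.mem_toFinset.mpr hn)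
    have : |n| ≤ (B:ℤ) := by rw [Int.abs_eq_natAbs]; exact_mod_cast h1
    exact abs_le.mp this
  set C : ℤ := (B : ℤ) + N with hC
  have hNpos : (0:ℤ) < N := by exact_mod_cast hN
  have hBnn : (0:ℤ) ≤ B := Int.natCast_nonneg B
  have hCnn : (0:ℤ) ≤ C := by positivity
  have hinner : ∀ γ ∈ Finset.range N,
      ∑ᶠ k : ℤ, f ((N:ℤ)*k + (γ:ℤ)) = ∑ k ∈ Finset.Icc (-C) C, f ((N:ℤ)*k + (γ:ℤ)) := by
    intro γ hγ
    apply finsum_int_eq_icc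
    intro k hk
    obtain ⟨hl, hr⟩ := hsup _ hk
    have hγ' : (γ:ℤ) < N := by exact_mod_cast Finset.mem_range.mp hγ
    have hγ0 : (0:ℤ) ≤ γ := Int.natCast_nonneg γ
    constructor
    · nlinarith [mul_le_mul_of_nonneg_left (show k ≤ C from by nlinarith) (le_of_lt hNpos)]
    · nlinarith [mul_le_mul_of_nonneg_left (show -C ≤ k from by nlinarith) (le_of_lt hNpos)]
  rw [Finset.sum_congr rfl hinner]
  have houter : ∑ᶠ n : ℤ, f n = ∑ n ∈ Finset.Icc (-((N:ℤ)*C)) ((N:ℤ)*C + N - 1), f n := by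
    apply finsum_int_eq_icc
    intro n hn
    obtain ⟨hl, hr⟩ := hsup _ hn
    constructor <;> nlinarith
  rw [houter]
  rw [← Finset.sum_product']
  refine Finset.sum_nbij' (fun n => ((n % N).toNat, n / N))
    (fun p => (N:ℤ) * p.2 + (p.1:ℤ)) ?_ ?_ ?_ ?_ ?_
  · intro n hn
    simp only [Finset.mem_Icc] at hn
    have h1 : 0 ≤ n % N := Int.emod_nonneg n (ne_of_gt hNpos)
    have h2 : n % N < N := Int.emod_lt_of_pos n hNpos
    simp only [Finset.mem_product, Finset.mem_range, Finset.mem_Icc]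
    refine ⟨by omega, ?_, ?_⟩
    · rw [Int.le_ediv_iff_mul_le hNpos]; nlinarith [hn.1]
    · have : n / N < C + 1 := by rw [Int.ediv_lt_iff_lt_mul hNpos]; nlinarith [hn.2]
      omega
  · rintro ⟨γ, k⟩ hp
    simp only [Finset.mem_product, Finset.mem_range, Finset.mem_Icc] at hp
    obtain ⟨hγ, hk1, hk2⟩ : γ < N ∧ -C ≤ k ∧ k ≤ C := ⟨hp.1, hp.2.1, hp.2.2⟩
    have hγ' : (γ:ℤ) < N := by exact_mod_cast hγ
    have hγ0 : (0:ℤ) ≤ γ := Int.natCast_nonneg γ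
    simp only [Finset.mem_Icc]
    constructor
    · nlinarith [mul_le_mul_of_nonneg_left hk1 (le_of_lt hNpos)]
    · nlinarith [mul_le_mul_of_nonneg_left hk2 (le_of_lt hNpos)]
  · intro n hn
    have h1 : 0 ≤ n % N := Int.emod_nonneg n (ne_of_gt hNpos)
    simp only [Int.toNat_of_nonneg h1]
    exact Int.mul_ediv_add_emod n N
  · rintro ⟨γ, k⟩ hp
    simp only [Finset.mem_product, Finset.mem_range] at hp
    have hγ' : (γ:ℤ) < N := by exact_mod_cast hp.1
    have hγ0 : (0:ℤ) ≤ γ := Int.natCast_nonneg γ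
    have hmod : ((N:ℤ) * k + γ) % N = γ := by
      rw [add_comm, Int.add_mul_emod_self_left, Int.emod_eq_of_lt hγ0 hγ']
    have hdiv : ((N:ℤ) * k + γ) / N = k := by
      rw [add_comm, Int.add_mul_ediv_left _ _ (ne_of_gt hNpos),
        Int.ediv_eq_zero_of_lt hγ0 hγ', zero_add]
    simp [hmod, hdiv]
  · intro n hn
    have h1 : 0 ≤ n % N := Int.emod_nonneg n (ne_of_gt hNpos)
    rw [Int.toNat_of_nonneg h1, Int.mul_ediv_add_emod n N]

lemma sum_residues_ite (f : ℤ → ℂ) (hf : (Function.support f).Finite) (N : ℕ) (hN : 0 < N)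
    (p : ℤ → Prop) [DecidablePred p] (hp : ∀ n, p (n + N) ↔ p n) :
    ∑ᶠ n : ℤ, (if p n then f n else 0)
      = ∑ γ ∈ (Finset.range N).filter (fun γ : ℕ => p (γ:ℤ)), ∑ᶠ k : ℤ, f ((N:ℤ)*k + (γ:ℤ)) := by
  have hper : ∀ (k : ℤ) (n : ℤ), p (n + N*k) ↔ p n := by
    intro k
    induction k using Int.induction_on with
    | zero => simp
    | succ i ih =>
      intro n
      have h1 := hp (n + N*i)
      have h2 := ih n
      have he : n + (N:ℤ)*(i+1) = n + N*i + N := by ring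
      rw [he, h1, h2]
    | pred i ih =>
      intro n
      have h1 := hp (n + N*(-(i:ℤ)-1))
      have h2 := ih n
      have he : n + (N:ℤ)*(-(i:ℤ)-1) + N = n + N*(-(i:ℤ)) := by ring
      rw [he] at h1
      rw [← h1, h2]
  have hsub : Function.support (fun n => if p n then f n else 0) ⊆ Function.support f := by
    intro n hn
    simp only [Function.mem_support] at hn ⊢
    intro h0
    apply hn
    split <;> simp [h0]
  rw [sum_residues _ (hf.subset hsub) N hN, Finset.sum_filter]
  refine Finset.sum_congr rfl (fun γ hγ => ?_)
  by_cases hpγ : p (γ:ℤ)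
  · rw [if_pos hpγ]
    refine finsum_congr (fun k => ?_)
    rw [if_pos (by rw [add_comm]; exact (hper k γ).mpr hpγ)]
  · rw [if_neg hpγ]
    have hz : ∀ k : ℤ, (if p ((N:ℤ)*k + (γ:ℤ)) then f ((N:ℤ)*k + (γ:ℤ)) else 0) = 0 := by
      intro k
      rw [if_neg (fun h => hpγ ((hper k γ).mp (by rwa [add_comm] at h)))]
    rw [finsum_congr hz, finsum_zero]

lemma finsum_reindex_dvd (f : ℤ → ℂ) (hf : (Function.support f).Finite) (N : ℕ) (hN : 0 < N)
    (c : ℤ) [∀ n : ℤ, Decidable ((N:ℤ) ∣ (n - c))] :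
    ∑ᶠ j : ℤ, f ((N:ℤ)*j + c) = ∑ᶠ n : ℤ, (if (N:ℤ) ∣ (n - c) then f n else 0) := by
  classical
  set B : ℕ := hf.toFinset.sup Int.natAbs with hB
  have hsup : ∀ n : ℤ, f n ≠ 0 → -(B:ℤ) ≤ n ∧ n ≤ B := by
    intro n hn
    have h1 : n.natAbs ≤ B := Finset.le_sup (hf.mem_toFinset.mpr hn)
    have : |n| ≤ (B:ℤ) := by rw [Int.abs_eq_natAbs]; exact_mod_cast h1
    exact abs_le.mp this
  have hNpos : (0:ℤ) < N := by exact_mod_cast hN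
  have hBnn : (0:ℤ) ≤ B := Int.natCast_nonneg B
  set C : ℤ := (B:ℤ) + |c| with hC
  have habs := abs_nonneg c
  have hc1 := le_abs_self c
  have hc2 := neg_abs_le c
  have hCnn : (0:ℤ) ≤ C := by positivity
  have hlhs : ∑ᶠ j : ℤ, f ((N:ℤ)*j + c) = ∑ j ∈ Finset.Icc (-C) C, f ((N:ℤ)*j + c) := by
    apply finsum_int_eq_icc
    intro j hj
    obtain ⟨hl, hr⟩ := hsup _ hj
    constructor
    · nlinarith [mul_le_mul_of_nonneg_left (show j ≤ C from by nlinarith) (le_of_lt hNpos)]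
    · nlinarith [mul_le_mul_of_nonneg_left (show -C ≤ j from by nlinarith) (le_of_lt hNpos)]
  have hrhs : ∑ᶠ n : ℤ, (if (N:ℤ) ∣ (n - c) then f n else 0)
      = ∑ n ∈ Finset.Icc (c - N*C) (c + N*C), (if (N:ℤ) ∣ (n - c) then f n else 0) := by
    apply finsum_int_eq_icc
    intro n hn
    have hfn : f n ≠ 0 := by intro h0; apply hn; split <;> simp [h0]
    obtain ⟨hl, hr⟩ := hsup _ hfn
    constructor <;> nlinarith
  rw [hlhs, hrhs, ← Finset.sum_filter]
  refine Finset.sum_nbij' (fun j => (N:ℤ)*j + c) (fun n => (n - c) / N) ?_ ?_ ?_ ?_ ?_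
  · intro j hj
    simp only [Finset.mem_Icc] at hj
    simp only [Finset.mem_filter, Finset.mem_Icc]
    refine ⟨⟨?_, ?_⟩, ⟨j, by ring⟩⟩
    · nlinarith [mul_le_mul_of_nonneg_left hj.1 (le_of_lt hNpos)]
    · nlinarith [mul_le_mul_of_nonneg_left hj.2 (le_of_lt hNpos)]
  · intro n hn
    simp only [Finset.mem_filter, Finset.mem_Icc] at hn
    obtain ⟨⟨h1, h2⟩, t, ht⟩ := hn
    show (n - c) / (N:ℤ) ∈ Finset.Icc (-C) C
    rw [ht, Int.mul_ediv_cancel_left _ (ne_of_gt hNpos)]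
    simp only [Finset.mem_Icc]
    constructor
    · exact le_of_mul_le_mul_left (by linarith) hNpos
    · exact le_of_mul_le_mul_left (by linarith) hNpos
  · intro j hj
    show ((N:ℤ)*j + c - c) / (N:ℤ) = j
    simp only [add_sub_cancel_right]
    exact Int.mul_ediv_cancel_left _ (ne_of_gt hNpos)
  · intro n hn
    simp only [Finset.mem_filter] at hn
    show (N:ℤ) * ((n - c) / (N:ℤ)) + c = n
    have := Int.mul_ediv_cancel' hn.2
    omega
  · intro j hj; rfl

lemma pow_zpow (z : ℂ) (hz : z ≠ 0) (N : ℕ) (j : ℤ) : (z ^ N) ^ j = z ^ ((N:ℤ) * j) := by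
  set u := Units.mk0 z hz with hu
  have hzu : z = (u : ℂ) := rfl
  rw [hzu, ← Units.val_pow_eq_pow_val, ← Units.val_zpow_eq_zpow_val,
    ← Units.val_zpow_eq_zpow_val, ← zpow_natCast u N, ← zpow_mul]

theorem refinable_necessary_condition
    (m : ℕ) (hm : 2 ≤ m) (τ : ℝ) (hτ : τ ∈ Set.Ico (0 : ℝ) 1)
    (a : ℤ → ℝ) (ha : (Function.support a).Finite)
    (φ : ℝ → ℝ) (hφc : Continuous φ) (hφs : HasCompactSupport φ)
    (href : ∀ x : ℝ, φ x = ∑ᶠ k : ℤ, a k * φ ((m : ℝ) * x - (k : ℝ) + τ))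
    (hdecay : ∃ C ε : ℝ, 0 < C ∧ 0 < ε ∧
      ∀ x : ℝ, |φ x| + ‖fourierT φ x‖ ≤ C * (1 + |x|) ^ (-1 - ε))
    (T : ℕ) (hT : 1 ≤ T) (s : ℕ) (hs : (s : ℝ) = τ * T) :
    ∀ ω : ℝ, ∀ z : ℂ,
      z = Complex.exp (-(2 * (Real.pi : ℂ) * Complex.I * (ω : ℂ) / (T : ℂ))) →
      ∑ γ ∈ Finset.range (m * T), PhiSub φ m T (γ : ℤ) (z ^ m) =
        (m : ℂ) * z ^ (-(s : ℤ)) *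
          ∑ β ∈ Finset.range m,
            ∑ γ ∈ (Finset.range (m * T)).filter (fun γ => (γ + β * T) % m = s % m),
              ASub a m (β : ℤ) (z ^ T) * PhiSub φ m T (γ : ℤ) z := by
  classical
  intro ω z hzdef
  have hz0 : z ≠ 0 := by rw [hzdef]; exact Complex.exp_ne_zero _
  have hT0 : (T:ℝ) ≠ 0 := by positivity
  have hTc : (T:ℂ) ≠ 0 := by exact_mod_cast (by positivity : (T:ℝ) ≠ 0)
  have hmpos : 0 < m := by omega
  have hm0 : (m:ℂ) ≠ 0 := by exact_mod_cast (by positivity : (0:ℝ) < (m:ℝ)).ne'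
  have hMpos : 0 < m * T := Nat.mul_pos hmpos hT
  set g : ℤ → ℂ := fun n => ((φ ((n:ℝ)/(T:ℝ)) : ℝ) : ℂ) with hgdef
  set b : ℤ → ℂ := fun k => ((a k : ℝ) : ℂ) with hbdef
  -- finiteness of supports
  have hbfin : (Function.support b).Finite := by
    apply ha.subset
    intro k hk
    simp only [Function.mem_support, hbdef, ne_eq, Complex.ofReal_eq_zero] at hk ⊢
    exact hk
  have hgfin : (Function.support g).Finite := by
    obtain ⟨R, hR⟩ := hφs.isCompact.isBounded.subset_closedBall 0
    have : Function.support g ⊆ Set.Icc (-(⌈R * T⌉)) ⌈R * T⌉ := by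
      intro n hn
      simp only [Function.mem_support, hgdef, ne_eq, Complex.ofReal_eq_zero] at hn
      have hmem : (n:ℝ)/(T:ℝ) ∈ tsupport φ := subset_tsupport φ hn
      have h2 : |(n:ℝ)|/(T:ℝ) ≤ R := by
        have := hR hmem
        simpa [Real.dist_eq, abs_div] using this
      have h3 : |(n:ℝ)| ≤ R * T := by
        have hTpos : (0:ℝ) < T := by positivity
        calc |(n:ℝ)| = |(n:ℝ)|/T * T := by field_simp
        _ ≤ R * T := by nlinarith [abs_nonneg (n:ℝ)]
      have h4 : ((n:ℝ)) ≤ ((⌈R*T⌉ : ℤ) : ℝ) := le_trans (le_abs_self _) (le_trans h3 (Int.le_ceil _))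
      have h5 : (((-(⌈R*T⌉)) : ℤ) : ℝ) ≤ (n:ℝ) := by
        push_cast
        have := neg_abs_le (n:ℝ)
        have := Int.le_ceil (R*T)
        linarith
      exact Set.mem_Icc.mpr ⟨by exact_mod_cast h5, by exact_mod_cast h4⟩
    exact (Set.finite_Icc _ _).subset this
  -- rewriting PhiSub in terms of g
  have hPhi : ∀ (n : ℤ) (w : ℂ), PhiSub φ m T n w
      = (T:ℂ)⁻¹ * ∑ᶠ k : ℤ, g ((m:ℤ)*(T:ℤ)*k + n) * w ^ ((m:ℤ)*(T:ℤ)*k + n) := by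
    intro n w
    unfold PhiSub
    congr 1
    refine finsum_congr (fun k => ?_)
    have harg : (m:ℝ) * (k:ℝ) + (n:ℝ)/(T:ℝ) = (((m:ℤ)*(T:ℤ)*k + n : ℤ) : ℝ)/(T:ℝ) := by
      push_cast
      field_simp
    rw [harg]
  -- Step 1 : collect LHS
  have hF1fin : (Function.support (fun n : ℤ => g n * (z^m)^n)).Finite := by
    apply hgfin.subset
    intro n hn
    simp only [Function.mem_support] at hn ⊢
    intro h0
    apply hn
    rw [h0, zero_mul]
  have hL1 : ∑ γ ∈ Finset.range (m * T), PhiSub φ m T (γ : ℤ) (z ^ m)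
      = (T:ℂ)⁻¹ * ∑ᶠ n : ℤ, g n * (z^m)^n := by
    rw [sum_residues _ hF1fin (m*T) hMpos, Finset.mul_sum]
    refine Finset.sum_congr rfl (fun γ hγ => ?_)
    rw [hPhi]
    congr 1
  -- Step 2 : refinement equation at j/T
  have hgref : ∀ j : ℤ, g j = ∑ᶠ k : ℤ, b k * g ((m:ℤ)*j - (T:ℤ)*k + (s:ℤ)) := by
    intro j
    have h0 := href ((j:ℝ)/(T:ℝ))
    have hτval : τ = (s:ℝ)/(T:ℝ) := by rw [hs]; field_simp
    have harg : ∀ k : ℤ, (m:ℝ)*((j:ℝ)/(T:ℝ)) - (k:ℝ) + τ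
        = (((m:ℤ)*j - (T:ℤ)*k + (s:ℤ) : ℤ) : ℝ)/(T:ℝ) := by
      intro k
      rw [hτval]
      push_cast
      field_simp
    have hsupfin : (Function.support (fun k : ℤ =>
        a k * φ ((m:ℝ)*((j:ℝ)/(T:ℝ)) - (k:ℝ) + τ))).Finite := by
      apply ha.subset
      intro k hk
      simp only [Function.mem_support] at hk ⊢
      intro h1
      apply hk
      rw [h1, zero_mul]
    calc g j = ((φ ((j:ℝ)/(T:ℝ)) : ℝ) : ℂ) := rfl
    _ = ((∑ᶠ k : ℤ, a k * φ ((m:ℝ)*((j:ℝ)/(T:ℝ)) - (k:ℝ) + τ) : ℝ) : ℂ) := by rw [← h0]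
    _ = ∑ᶠ k : ℤ, ((a k * φ ((m:ℝ)*((j:ℝ)/(T:ℝ)) - (k:ℝ) + τ) : ℝ) : ℂ) :=
        Complex.ofRealHom.toAddMonoidHom.map_finsum hsupfin
    _ = ∑ᶠ k : ℤ, b k * g ((m:ℤ)*j - (T:ℤ)*k + (s:ℤ)) := by
        refine finsum_congr (fun k => ?_)
        rw [Complex.ofReal_mul, harg k]
  -- bounds for supports
  set Bg : ℕ := hgfin.toFinset.sup Int.natAbs with hBgdef
  have hgbnd : ∀ n : ℤ, g n ≠ 0 → -(Bg:ℤ) ≤ n ∧ n ≤ Bg := by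
    intro n hn
    have h1 : n.natAbs ≤ Bg := Finset.le_sup (hgfin.mem_toFinset.mpr hn)
    have : |n| ≤ (Bg:ℤ) := by rw [Int.abs_eq_natAbs]; exact_mod_cast h1
    exact abs_le.mp this
  set Ba : ℕ := hbfin.toFinset.sup Int.natAbs with hBadef
  have hbbnd : ∀ k : ℤ, b k ≠ 0 → -(Ba:ℤ) ≤ k ∧ k ≤ Ba := by
    intro k hk
    have h1 : k.natAbs ≤ Ba := Finset.le_sup (hbfin.mem_toFinset.mpr hk)
    have : |k| ≤ (Ba:ℤ) := by rw [Int.abs_eq_natAbs]; exact_mod_cast h1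
    exact abs_le.mp this
  set D : ℤ := (Bg:ℤ) + (T:ℤ)*(Ba:ℤ) + (s:ℤ) with hDdef
  have hsnn : (0:ℤ) ≤ (s:ℤ) := Int.natCast_nonneg s
  have hTnn : (0:ℤ) ≤ (T:ℤ) := Int.natCast_nonneg T
  have hm1 : (1:ℤ) ≤ (m:ℤ) := by exact_mod_cast hmpos
  have hDnn : (0:ℤ) ≤ D := by positivity
  -- P j k and its support bound in j
  have hPbnd : ∀ j k : ℤ, b k * g ((m:ℤ)*j - (T:ℤ)*k + (s:ℤ)) * (z^m)^j ≠ 0 →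
      -D ≤ j ∧ j ≤ D := by
    intro j k hne
    have hb : b k ≠ 0 := by intro h; apply hne; rw [h]; ring
    have hg : g ((m:ℤ)*j - (T:ℤ)*k + (s:ℤ)) ≠ 0 := by intro h; apply hne; rw [h]; ring
    obtain ⟨hk1, hk2⟩ := hbbnd k hb
    obtain ⟨hg1, hg2⟩ := hgbnd _ hg
    have hTk1 : -((T:ℤ)*Ba) ≤ (T:ℤ)*k := by nlinarith
    have hTk2 : (T:ℤ)*k ≤ (T:ℤ)*Ba := by nlinarith
    have hmj1 : -D ≤ (m:ℤ)*j := by rw [hDdef]; linarith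
    have hmj2 : (m:ℤ)*j ≤ D := by rw [hDdef]; linarith
    constructor
    · rcases le_or_gt 0 j with h | h
      · linarith
      · have : ((m:ℤ)-1)*j ≤ 0 := mul_nonpos_of_nonneg_of_nonpos (by linarith) (le_of_lt h)
        linarith
    · rcases le_or_gt 0 j with h | h
      · have : j ≤ (m:ℤ)*j := le_mul_of_one_le_left h hm1
        linarith
      · linarith
  -- Step 3 : convert double finsum to double finset sum and swap
  set K : Finset ℤ := Finset.Icc (-(Ba:ℤ)) (Ba:ℤ) with hKdef
  have hL2 : ∑ᶠ n : ℤ, g n * (z^m)^n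
      = ∑ᶠ j : ℤ, ∑ᶠ k : ℤ, b k * g ((m:ℤ)*j - (T:ℤ)*k + (s:ℤ)) * (z^m)^j := by
    refine finsum_congr (fun j => ?_)
    have hfin : (Function.support (fun k : ℤ => b k * g ((m:ℤ)*j - (T:ℤ)*k + (s:ℤ)))).Finite := by
      apply hbfin.subset
      intro k hk
      simp only [Function.mem_support] at hk ⊢
      intro h0; apply hk; rw [h0, zero_mul]
    rw [hgref j, finsum_mul _ _]
  have hL3 : ∑ᶠ j : ℤ, ∑ᶠ k : ℤ, b k * g ((m:ℤ)*j - (T:ℤ)*k + (s:ℤ)) * (z^m)^j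
      = ∑ k ∈ K, ∑ᶠ j : ℤ, b k * g ((m:ℤ)*j - (T:ℤ)*k + (s:ℤ)) * (z^m)^j := by
    have houter : ∑ᶠ j : ℤ, ∑ᶠ k : ℤ, b k * g ((m:ℤ)*j - (T:ℤ)*k + (s:ℤ)) * (z^m)^j
        = ∑ j ∈ Finset.Icc (-D) D, ∑ᶠ k : ℤ, b k * g ((m:ℤ)*j - (T:ℤ)*k + (s:ℤ)) * (z^m)^j := by
      apply finsum_int_eq_icc
      intro j hj
      have hex : ∃ k : ℤ, b k * g ((m:ℤ)*j - (T:ℤ)*k + (s:ℤ)) * (z^m)^j ≠ 0 := by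
        by_contra hcon
        push_neg at hcon
        exact hj (by rw [finsum_congr hcon, finsum_zero])
      obtain ⟨k, hk⟩ := hex
      exact hPbnd j k hk
    have hinner : ∀ j : ℤ, ∑ᶠ k : ℤ, b k * g ((m:ℤ)*j - (T:ℤ)*k + (s:ℤ)) * (z^m)^j
        = ∑ k ∈ K, b k * g ((m:ℤ)*j - (T:ℤ)*k + (s:ℤ)) * (z^m)^j := by
      intro j
      apply finsum_int_eq_icc
      intro k hk
      have hb : b k ≠ 0 := by intro h; apply hk; rw [h]; ring
      exact hbbnd k hb
    rw [houter, Finset.sum_congr rfl (fun j _ => hinner j), Finset.sum_comm]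
    refine Finset.sum_congr rfl (fun k _ => ?_)
    symm
    apply finsum_int_eq_icc
    intro j hj
    exact hPbnd j k hj
  -- Step 4 : reindex each inner sum
  set H : ℤ → ℂ := fun k => ∑ᶠ n : ℤ,
    (if (m:ℤ) ∣ (n + (T:ℤ)*k - (s:ℤ)) then b k * g n * z^(n + (T:ℤ)*k - (s:ℤ)) else 0)
    with hHdef
  have hre : ∀ k : ℤ, (∑ᶠ j : ℤ, b k * g ((m:ℤ)*j - (T:ℤ)*k + (s:ℤ)) * (z^m)^j) = H k := by
    intro k
    have hQfin : (Function.support (fun n : ℤ => b k * g n * z^(n + (T:ℤ)*k - (s:ℤ)))).Finite := by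
      apply hgfin.subset
      intro n hn
      simp only [Function.mem_support] at hn ⊢
      intro h0; apply hn; rw [h0, mul_zero, zero_mul]
    have h1 := finsum_reindex_dvd (fun n : ℤ => b k * g n * z^(n + (T:ℤ)*k - (s:ℤ)))
      hQfin m hmpos ((s:ℤ) - (T:ℤ)*k)
    calc ∑ᶠ j : ℤ, b k * g ((m:ℤ)*j - (T:ℤ)*k + (s:ℤ)) * (z^m)^j
        = ∑ᶠ j : ℤ, b k * g ((m:ℤ)*j + ((s:ℤ) - (T:ℤ)*k))
            * z^(((m:ℤ)*j + ((s:ℤ) - (T:ℤ)*k)) + (T:ℤ)*k - (s:ℤ)) := by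
          refine finsum_congr (fun j => ?_)
          rw [show (m:ℤ)*j - (T:ℤ)*k + (s:ℤ) = (m:ℤ)*j + ((s:ℤ) - (T:ℤ)*k) from by ring,
            show ((m:ℤ)*j + ((s:ℤ) - (T:ℤ)*k)) + (T:ℤ)*k - (s:ℤ) = (m:ℤ)*j from by ring,
            pow_zpow z hz0 m j]
    _ = ∑ᶠ n : ℤ, (if (m:ℤ) ∣ (n - ((s:ℤ) - (T:ℤ)*k))
            then b k * g n * z^(n + (T:ℤ)*k - (s:ℤ)) else 0) := h1
    _ = H k := by
          show _ = ∑ᶠ n : ℤ, (if (m:ℤ) ∣ (n + (T:ℤ)*k - (s:ℤ))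
            then b k * g n * z^(n + (T:ℤ)*k - (s:ℤ)) else 0)
          refine finsum_congr (fun n => ?_)
          rw [show n - ((s:ℤ) - (T:ℤ)*k) = n + (T:ℤ)*k - (s:ℤ) from by ring]
  -- Step 5 : back to a finsum over k and regroup mod m
  have hHsupp : Function.support H ⊆ Function.support b := by
    intro k hk
    simp only [Function.mem_support] at hk ⊢
    intro hbk
    apply hk
    have hzero : ∀ n : ℤ,
        (if (m:ℤ) ∣ (n + (T:ℤ)*k - (s:ℤ)) then b k * g n * z^(n + (T:ℤ)*k - (s:ℤ)) else 0)
          = 0 := by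
      intro n; rw [hbk]; split <;> simp
    show (∑ᶠ n : ℤ, (if (m:ℤ) ∣ (n + (T:ℤ)*k - (s:ℤ))
      then b k * g n * z^(n + (T:ℤ)*k - (s:ℤ)) else 0)) = 0
    rw [finsum_congr hzero, finsum_zero]
  have hL4 : ∑ k ∈ K, H k = ∑ᶠ k : ℤ, H k := by
    symm
    apply finsum_int_eq_icc
    intro k hk
    exact hbbnd k (hHsupp (Function.mem_support.mpr hk))
  have hmZ0 : (m:ℤ) ≠ 0 := by exact_mod_cast hmpos.ne'
  have hL5 : ∑ᶠ k : ℤ, H k = ∑ β ∈ Finset.range m, ∑ᶠ k' : ℤ, H ((m:ℤ)*k' + (β:ℤ)) :=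
    sum_residues H (hbfin.subset hHsupp) m hmpos
  have hSfin : ∀ β : ℕ, (Function.support (fun n : ℤ =>
      if (m:ℤ) ∣ (n + (T:ℤ)*(β:ℤ) - (s:ℤ)) then g n * z^n else 0)).Finite := by
    intro β
    apply hgfin.subset
    intro n hn
    simp only [Function.mem_support] at hn ⊢
    intro h0; apply hn; split <;> simp [h0]
  have hHval : ∀ (β : ℕ) (k' : ℤ), H ((m:ℤ)*k' + (β:ℤ))
      = (b ((m:ℤ)*k' + (β:ℤ)) * z^((T:ℤ)*((m:ℤ)*k' + (β:ℤ))) * z^(-(s:ℤ)))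
        * ∑ᶠ n : ℤ, (if (m:ℤ) ∣ (n + (T:ℤ)*(β:ℤ) - (s:ℤ)) then g n * z^n else 0) := by
    intro β k'
    have hc : ∀ n : ℤ, ((m:ℤ) ∣ (n + (T:ℤ)*((m:ℤ)*k' + (β:ℤ)) - (s:ℤ)))
        ↔ ((m:ℤ) ∣ (n + (T:ℤ)*(β:ℤ) - (s:ℤ))) := by
      intro n
      rw [show n + (T:ℤ)*((m:ℤ)*k' + (β:ℤ)) - (s:ℤ)
          = (m:ℤ)*((T:ℤ)*k') + (n + (T:ℤ)*(β:ℤ) - (s:ℤ)) from by ring]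
      exact dvd_add_right (dvd_mul_right _ _)
    have hmul := mul_finsum (fun n : ℤ =>
        if (m:ℤ) ∣ (n + (T:ℤ)*(β:ℤ) - (s:ℤ)) then g n * z^n else 0)
      (b ((m:ℤ)*k' + (β:ℤ)) * z^((T:ℤ)*((m:ℤ)*k' + (β:ℤ))) * z^(-(s:ℤ)))
    rw [hmul]
    show (∑ᶠ n : ℤ, (if (m:ℤ) ∣ (n + (T:ℤ)*((m:ℤ)*k' + (β:ℤ)) - (s:ℤ))
      then b ((m:ℤ)*k' + (β:ℤ)) * g n * z^(n + (T:ℤ)*((m:ℤ)*k' + (β:ℤ)) - (s:ℤ)) else 0)) = _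
    refine finsum_congr (fun n => ?_)
    by_cases hd : (m:ℤ) ∣ (n + (T:ℤ)*(β:ℤ) - (s:ℤ))
    · rw [if_pos ((hc n).mpr hd), mul_ite, mul_zero, if_pos hd]
      rw [show n + (T:ℤ)*((m:ℤ)*k' + (β:ℤ)) - (s:ℤ)
          = (T:ℤ)*((m:ℤ)*k' + (β:ℤ)) + (-(s:ℤ) + n) from by ring,
        zpow_add₀ hz0, zpow_add₀ hz0]
      ring
    · rw [if_neg (fun h => hd ((hc n).mp h)), mul_ite, mul_zero, if_neg hd]
  have hstep : ∀ β ∈ Finset.range m, ∑ᶠ k' : ℤ, H ((m:ℤ)*k' + (β:ℤ))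
      = ((m:ℂ) * ASub a m (β:ℤ) (z^T)) * (z^(-(s:ℤ))
        * ∑ᶠ n : ℤ, (if (m:ℤ) ∣ (n + (T:ℤ)*(β:ℤ) - (s:ℤ)) then g n * z^n else 0)) := by
    intro β _
    have hfinb : (Function.support (fun k' : ℤ =>
        b ((m:ℤ)*k' + (β:ℤ)) * z^((T:ℤ)*((m:ℤ)*k' + (β:ℤ))))).Finite := by
      have hinj : Function.Injective (fun k' : ℤ => (m:ℤ)*k' + (β:ℤ)) := by
        intro x y hxy
        simp only [add_left_inj] at hxy
        exact mul_left_cancel₀ hmZ0 hxy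
      apply (hbfin.preimage hinj.injOn).subset
      intro k' hk'
      simp only [Function.mem_support] at hk'
      have hb : b ((m:ℤ)*k' + (β:ℤ)) ≠ 0 := fun h0 => hk' (by rw [h0, zero_mul])
      simpa [Set.mem_preimage, Function.mem_support] using hb
    calc ∑ᶠ k' : ℤ, H ((m:ℤ)*k' + (β:ℤ))
        = ∑ᶠ k' : ℤ, (b ((m:ℤ)*k' + (β:ℤ)) * z^((T:ℤ)*((m:ℤ)*k' + (β:ℤ))))
            * (z^(-(s:ℤ)) * ∑ᶠ n : ℤ, (if (m:ℤ) ∣ (n + (T:ℤ)*(β:ℤ) - (s:ℤ))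
                then g n * z^n else 0)) := by
          refine finsum_congr (fun k' => ?_)
          rw [hHval β k']
          ring
    _ = (∑ᶠ k' : ℤ, b ((m:ℤ)*k' + (β:ℤ)) * z^((T:ℤ)*((m:ℤ)*k' + (β:ℤ))))
          * (z^(-(s:ℤ)) * ∑ᶠ n : ℤ, (if (m:ℤ) ∣ (n + (T:ℤ)*(β:ℤ) - (s:ℤ))
              then g n * z^n else 0)) := (finsum_mul _ _).symm
    _ = ((m:ℂ) * ASub a m (β:ℤ) (z^T)) * (z^(-(s:ℤ))
          * ∑ᶠ n : ℤ, (if (m:ℤ) ∣ (n + (T:ℤ)*(β:ℤ) - (s:ℤ)) then g n * z^n else 0)) := by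
          congr 1
          unfold ASub
          rw [← mul_assoc, mul_inv_cancel₀ hm0, one_mul]
          exact finsum_congr (fun k => by rw [pow_zpow z hz0 T])
  have hSval : ∀ β : ℕ, (∑ᶠ n : ℤ, (if (m:ℤ) ∣ (n + (T:ℤ)*(β:ℤ) - (s:ℤ)) then g n * z^n else 0))
      = (T:ℂ) * ∑ γ ∈ (Finset.range (m*T)).filter (fun γ => (γ + β * T) % m = s % m),
          PhiSub φ m T (γ:ℤ) z := by
    intro β
    have hgzfin : (Function.support (fun n : ℤ => g n * z^n)).Finite := by
      apply hgfin.subset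
      intro n hn
      simp only [Function.mem_support] at hn ⊢
      intro h0; apply hn; rw [h0, zero_mul]
    have hper : ∀ n : ℤ, ((m:ℤ) ∣ ((n + ((m*T:ℕ):ℤ)) + (T:ℤ)*(β:ℤ) - (s:ℤ)))
        ↔ ((m:ℤ) ∣ (n + (T:ℤ)*(β:ℤ) - (s:ℤ))) := by
      intro n
      rw [show (n + ((m*T:ℕ):ℤ)) + (T:ℤ)*(β:ℤ) - (s:ℤ)
          = (m:ℤ)*(T:ℤ) + (n + (T:ℤ)*(β:ℤ) - (s:ℤ)) from by push_cast; ring]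
      exact dvd_add_right (dvd_mul_right _ _)
    rw [sum_residues_ite (fun n : ℤ => g n * z^n) hgzfin (m*T) hMpos _ hper]
    rw [Finset.mul_sum]
    refine Finset.sum_congr ?_ ?_
    · apply Finset.filter_congr
      intro γ hγ
      have e1 : ((γ + β*T) % m = s % m) ↔ (((γ:ℤ) + (β:ℤ)*(T:ℤ)) % (m:ℤ) = (s:ℤ) % (m:ℤ)) := by
        rw [← Nat.cast_inj (R := ℤ)]
        push_cast
        rfl
      have e2 : (((γ:ℤ) + (β:ℤ)*(T:ℤ)) % (m:ℤ) = (s:ℤ) % (m:ℤ))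
          ↔ ((m:ℤ) ∣ ((γ:ℤ) + (T:ℤ)*(β:ℤ) - (s:ℤ))) := by
        rw [Int.emod_eq_emod_iff_emod_sub_eq_zero, ← Int.dvd_iff_emod_eq_zero,
          show (γ:ℤ) + (β:ℤ)*(T:ℤ) - (s:ℤ) = (γ:ℤ) + (T:ℤ)*(β:ℤ) - (s:ℤ) from by ring]
      constructor
      · intro h
        exact e1.mpr (e2.mpr h)
      · intro h
        exact e2.mp (e1.mp h)
    · intro γ hγ
      rw [hPhi (γ:ℤ) z, ← mul_assoc, mul_inv_cancel₀ hTc, one_mul]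
      refine finsum_congr (fun k => ?_)
      rw [show (((m*T:ℕ)):ℤ) * k + (γ:ℤ) = (m:ℤ)*(T:ℤ)*k + (γ:ℤ) from by push_cast; ring]
  calc ∑ γ ∈ Finset.range (m * T), PhiSub φ m T (γ:ℤ) (z ^ m)
      = (T:ℂ)⁻¹ * ∑ᶠ n : ℤ, g n * (z^m)^n := hL1
  _ = (T:ℂ)⁻¹ * ∑ k ∈ K, H k := by
      rw [hL2, hL3]
      exact congrArg _ (Finset.sum_congr rfl (fun k _ => hre k))
  _ = (T:ℂ)⁻¹ * ∑ β ∈ Finset.range m, ∑ᶠ k' : ℤ, H ((m:ℤ)*k' + (β:ℤ)) := by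
      rw [hL4, hL5]
  _ = (T:ℂ)⁻¹ * ∑ β ∈ Finset.range m, ((m:ℂ) * ASub a m (β:ℤ) (z^T)) * (z^(-(s:ℤ))
        * ((T:ℂ) * ∑ γ ∈ (Finset.range (m*T)).filter (fun γ => (γ + β * T) % m = s % m),
            PhiSub φ m T (γ:ℤ) z)) := by
      congr 1
      refine Finset.sum_congr rfl (fun β hβ => ?_)
      rw [hstep β hβ, hSval β]
  _ = (m : ℂ) * z ^ (-(s : ℤ)) *
        ∑ β ∈ Finset.range m,
          ∑ γ ∈ (Finset.range (m * T)).filter (fun γ => (γ + β * T) % m = s % m),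
            ASub a m (β : ℤ) (z ^ T) * PhiSub φ m T (γ : ℤ) z := by
      rw [Finset.mul_sum, Finset.mul_sum]
      refine Finset.sum_congr rfl (fun β hβ => ?_)
      rw [show ∑ γ ∈ (Finset.range (m * T)).filter (fun γ => (γ + β * T) % m = s % m),
            ASub a m (β : ℤ) (z ^ T) * PhiSub φ m T (γ : ℤ) z
          = ASub a m (β : ℤ) (z ^ T) * ∑ γ ∈ (Finset.range (m * T)).filter
              (fun γ => (γ + β * T) % m = s % m), PhiSub φ m T (γ : ℤ) z
          from (Finset.mul_sum _ _ _).symm]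
      field_simp
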